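/- Let J be a Borel-fixed monomial ideal in k[x1,x2,x3,x4] (char k = 0) with the same Hilbert function as a complete intersection of three quadrics in P^3 (Hilbert series of S/J equals (1-t^2)^3/(1-t)^4), and satisfying J : x4 = J. Then J equals either J1 = (x1^2, x1x2, x2^2, x1x3^2, x2x3^2, x3^4) or J2 = (x1^2, x1x2, x1x3, x2^3, x2^2x3, x2x3^2, x3^4). -/

import Mathlib

open MvPolynomial

set_option synthInstance.maxHeartbeats 1000000
set_option maxHeartbeats 1000000

noncomputable section

/-- exponent vector -/
def ee (a b c d : ℕ) : Fin 4 →₀ ℕ := Finsupp.equivFunOnFinite.symm ![a, b, c, d]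

lemma ee_apply0 (a b c d : ℕ) : ee a b c d 0 = a := rfl
lemma ee_apply1 (a b c d : ℕ) : ee a b c d 1 = b := rfl
lemma ee_apply2 (a b c d : ℕ) : ee a b c d 2 = c := rfl
lemma ee_apply3 (a b c d : ℕ) : ee a b c d 3 = d := rfl

lemma ee_eta (I : Fin 4 →₀ ℕ) : ee (I 0) (I 1) (I 2) (I 3) = I := by
  ext i
  fin_cases i <;> rfl

lemma ee_add (a b c d a' b' c' d' : ℕ) :
    ee a b c d + ee a' b' c' d' = ee (a + a') (b + b') (c + c') (d + d') := by
  ext i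
  fin_cases i <;> rfl

lemma ee_degree (a b c d : ℕ) : (ee a b c d).degree = a + b + c + d := by
  rw [Finsupp.degree_apply]
  rw [Finset.sum_subset (Finset.subset_univ _)]
  · show (∑ i : Fin 4, ee a b c d i) = _
    rw [Fin.sum_univ_four]
    rfl
  · intro x _ hx
    simpa using hx

lemma ee_congr {a b c d a' b' c' d' : ℕ} (h1 : a = a') (h2 : b = b') (h3 : c = c')
    (h4 : d = d') : ee a b c d = ee a' b' c' d' := by subst h1 h2 h3 h4; rfl

lemma ee_injective : Function.Injective (fun p : ℕ × ℕ × ℕ × ℕ => ee p.1 p.2.1 p.2.2.1 p.2.2.2) := by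
  rintro ⟨a, b, c, d⟩ ⟨a', b', c', d'⟩ h
  simp only [Prod.mk.injEq]
  simp only at h
  have h0 := congrArg (fun f : Fin 4 →₀ ℕ => f 0) h
  have h1 := congrArg (fun f : Fin 4 →₀ ℕ => f 1) h
  have h2 := congrArg (fun f : Fin 4 →₀ ℕ => f 2) h
  have h3 := congrArg (fun f : Fin 4 →₀ ℕ => f 3) h
  exact ⟨h0, h1, h2, h3⟩

section

variable {k : Type*} [Field k]

/-- divisibility implies membership, for any ideal and the `ee` normal form -/
lemma mem_mul {J : Ideal (MvPolynomial (Fin 4) k)} {a b c d a' b' c' d' : ℕ}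
    (h : (monomial (ee a b c d) 1 : MvPolynomial (Fin 4) k) ∈ J)
    (ha : a ≤ a' := by omega) (hb : b ≤ b' := by omega) (hc : c ≤ c' := by omega)
    (hd : d ≤ d' := by omega) :
    (monomial (ee a' b' c' d') 1 : MvPolynomial (Fin 4) k) ∈ J := by
  have : (monomial (ee (a'-a) (b'-b) (c'-c) (d'-d)) 1 : MvPolynomial (Fin 4) k) *
      monomial (ee a b c d) 1 = monomial (ee a' b' c' d') 1 := by
    rw [monomial_mul, one_mul, ee_add]
    exact congrArg (fun I => monomial I 1) (ee_congr (by omega) (by omega) (by omega) (by omega))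
  rw [← this]
  exact J.mul_mem_left _ h

end


/-- The Hilbert function of the quotient by a complete intersection of three quadrics in `P³`:
`1, 4, 7, 8, 8, …` (the series `(1-t²)³/(1-t)⁴`). -/
def hCI : ℕ → ℕ := fun d =>
  if d = 0 then 1 else if d = 1 then 4 else if d = 2 then 7 else 8





lemma degree_components (I : Fin 4 →₀ ℕ) : I.degree = I 0 + I 1 + I 2 + I 3 := by
  conv_lhs => rw [← ee_eta I]
  rw [ee_degree]

section
variable {k : Type*} [Field k] {J : Ideal (MvPolynomial (Fin 4) k)}

local instance : DecidableEq (MvPolynomial (Fin 4) k) := Classical.decEq _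

/-- the graded piece of `J` in degree `d` -/
abbrev gp (k : Type*) [Field k] (J : Ideal (MvPolynomial (Fin 4) k)) (d : ℕ) :
    Submodule k (MvPolynomial (Fin 4) k) :=
  homogeneousSubmodule (Fin 4) k d ⊓ J.restrictScalars k

lemma deg_of_support {f : MvPolynomial (Fin 4) k} {d : ℕ}
    (hf : f ∈ homogeneousSubmodule (Fin 4) k d) {I : Fin 4 →₀ ℕ} (hI : I ∈ f.support) :
    I.degree = d := by
  have := (mem_homogeneousSubmodule _ _).1 hf (mem_support_iff.mp hI)
  rwa [Finsupp.degree_eq_weight_one]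

lemma span_aux (d : ℕ) (T : Finset (ℕ × ℕ × ℕ × ℕ))
    (hT : ∀ I : Fin 4 →₀ ℕ, I.degree = d → (monomial I 1 : MvPolynomial (Fin 4) k) ∈ J →
      (I 0, I 1, I 2, I 3) ∈ T)
    (hmono : ∀ f ∈ J, ∀ I ∈ f.support, (monomial I 1 : MvPolynomial (Fin 4) k) ∈ J) :
    gp k J d ≤ Submodule.span k
      ((T.image (fun p => (monomial (ee p.1 p.2.1 p.2.2.1 p.2.2.2) 1 :
        MvPolynomial (Fin 4) k))) : Set (MvPolynomial (Fin 4) k)) := by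
  intro f hf
  obtain ⟨hf1, hf2⟩ := Submodule.mem_inf.1 hf
  rw [as_sum f]
  apply Submodule.sum_mem
  intro I hI
  have hd : I.degree = d := deg_of_support hf1 hI
  have hm : (monomial I 1 : MvPolynomial (Fin 4) k) ∈ J := hmono f hf2 I hI
  have : (monomial I (coeff I f) : MvPolynomial (Fin 4) k) = coeff I f • monomial I 1 := by
    rw [smul_monomial, smul_eq_mul, mul_one]
  rw [this]
  apply Submodule.smul_mem
  apply Submodule.subset_span
  simp only [Finset.coe_image, Set.mem_image, Finset.mem_coe]
  exact ⟨(I 0, I 1, I 2, I 3), hT I hd hm, by rw [ee_eta]⟩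

def Tall (d : ℕ) : Finset (ℕ × ℕ × ℕ × ℕ) :=
  ((Finset.range (d+1)) ×ˢ (Finset.range (d+1)) ×ˢ (Finset.range (d+1)) ×ˢ
    (Finset.range (d+1))).filter (fun p => p.1 + p.2.1 + p.2.2.1 + p.2.2.2 = d)

lemma finiteDim (d : ℕ)
    (hmono : ∀ f ∈ J, ∀ I ∈ f.support, (monomial I 1 : MvPolynomial (Fin 4) k) ∈ J) :
    FiniteDimensional k ↥(gp k J d) := by
  apply Submodule.finiteDimensional_of_le (S₂ := Submodule.span k
    ((((Tall d).image (fun p => (monomial (ee p.1 p.2.1 p.2.2.1 p.2.2.2) 1 :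
      MvPolynomial (Fin 4) k)))) : Set (MvPolynomial (Fin 4) k)))
  apply span_aux d (Tall d) _ hmono
  intro I hd _
  have := degree_components I
  simp only [Tall, Finset.mem_filter, Finset.mem_product, Finset.mem_range]
  omega

lemma rank_upper (d : ℕ) (T : Finset (ℕ × ℕ × ℕ × ℕ))
    (hmono : ∀ f ∈ J, ∀ I ∈ f.support, (monomial I 1 : MvPolynomial (Fin 4) k) ∈ J)
    (hT : ∀ I : Fin 4 →₀ ℕ, I.degree = d → (monomial I 1 : MvPolynomial (Fin 4) k) ∈ J →
      (I 0, I 1, I 2, I 3) ∈ T) :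
    Module.finrank k ↥(gp k J d) ≤ T.card := by
  have h1 := Submodule.finrank_mono (span_aux d T hT hmono)
  exact h1.trans ((finrank_span_finset_le_card _).trans (Finset.card_image_le))

lemma rank_lower (d : ℕ) (T : Finset (ℕ × ℕ × ℕ × ℕ))
    (hmono : ∀ f ∈ J, ∀ I ∈ f.support, (monomial I 1 : MvPolynomial (Fin 4) k) ∈ J)
    (h1 : ∀ p ∈ T, p.1 + p.2.1 + p.2.2.1 + p.2.2.2 = d)
    (h2 : ∀ p ∈ T, (monomial (ee p.1 p.2.1 p.2.2.1 p.2.2.2) 1 : MvPolynomial (Fin 4) k) ∈ J) :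
    T.card ≤ Module.finrank k ↥(gp k J d) := by
  haveI := finiteDim d hmono
  set v : {x // x ∈ T} → ↥(gp k J d) := fun p =>
    ⟨monomial (ee p.1.1 p.1.2.1 p.1.2.2.1 p.1.2.2.2) 1,
      Submodule.mem_inf.2 ⟨(mem_homogeneousSubmodule _ _).2 (isHomogeneous_monomial 1
        (by rw [ee_degree]; exact h1 p.1 p.2)), h2 p.1 p.2⟩⟩ with hv
  have hind : LinearIndependent k v := by
    apply LinearIndependent.of_comp (gp k J d).subtype
    have : ((gp k J d).subtype ∘ v) = ⇑(basisMonomials (Fin 4) k) ∘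
        ((fun p : ℕ × ℕ × ℕ × ℕ => ee p.1 p.2.1 p.2.2.1 p.2.2.2) ∘ Subtype.val) := by
      funext p
      simp [hv, coe_basisMonomials]
    rw [this]
    exact (basisMonomials (Fin 4) k).linearIndependent.comp _
      (ee_injective.comp Subtype.val_injective)
  simpa [Fintype.card_coe] using hind.fintype_card_le_finrank

end



lemma components (I : Fin 4 →₀ ℕ) : ∃ a b c d, I = ee a b c d :=
  ⟨I 0, I 1, I 2, I 3, by ext i; fin_cases i <;> rfl⟩

section
variable {k : Type*} [Field k] {J : Ideal (MvPolynomial (Fin 4) k)}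

lemma strip (hsat : J.colon ((Ideal.span {X 3} : Ideal (MvPolynomial (Fin 4) k)) :
    Set (MvPolynomial (Fin 4) k)) = J) {a b c d : ℕ}
    (h : (monomial (ee a b c (d+1)) 1 : MvPolynomial (Fin 4) k) ∈ J) :
    (monomial (ee a b c d) 1 : MvPolynomial (Fin 4) k) ∈ J := by
  rw [← hsat, Ideal.mem_colon_span_singleton]
  have hs : Finsupp.single (3 : Fin 4) 1 = ee 0 0 0 1 := by
    ext i; fin_cases i <;> simp [ee, Finsupp.single_apply]
  rw [X, hs, monomial_mul, mul_one, ee_add]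
  simp only [Nat.add_zero]
  exact h

lemma strip0 (hsat : J.colon ((Ideal.span {X 3} : Ideal (MvPolynomial (Fin 4) k)) :
    Set (MvPolynomial (Fin 4) k)) = J) {a b c : ℕ} :
    ∀ {d : ℕ}, (monomial (ee a b c d) 1 : MvPolynomial (Fin 4) k) ∈ J →
      (monomial (ee a b c 0) 1 : MvPolynomial (Fin 4) k) ∈ J
  | 0, h => h
  | (_+1), h => strip0 hsat (strip hsat h)

lemma move21 (hborel : ∀ I : Fin 4 →₀ ℕ, (monomial I 1 : MvPolynomial (Fin 4) k) ∈ J →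
      ∀ i j : Fin 4, j < i → 0 < I i →
        (monomial (I - Finsupp.single i 1 + Finsupp.single j 1) 1 :
          MvPolynomial (Fin 4) k) ∈ J)
    {a b c d : ℕ} (h : (monomial (ee a b (c+1) d) 1 : MvPolynomial (Fin 4) k) ∈ J) :
    (monomial (ee a (b+1) c d) 1 : MvPolynomial (Fin 4) k) ∈ J := by
  have := hborel _ h 2 1 (by decide) (Nat.succ_pos c)
  have he : ee a b (c+1) d - Finsupp.single 2 1 + Finsupp.single 1 1 = ee a (b+1) c d := by
    ext i
    rw [Finsupp.add_apply, Finsupp.tsub_apply]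
    fin_cases i <;> simp [ee, Finsupp.single_apply]
  rwa [he] at this

lemma move10 (hborel : ∀ I : Fin 4 →₀ ℕ, (monomial I 1 : MvPolynomial (Fin 4) k) ∈ J →
      ∀ i j : Fin 4, j < i → 0 < I i →
        (monomial (I - Finsupp.single i 1 + Finsupp.single j 1) 1 :
          MvPolynomial (Fin 4) k) ∈ J)
    {a b c d : ℕ} (h : (monomial (ee a (b+1) c d) 1 : MvPolynomial (Fin 4) k) ∈ J) :
    (monomial (ee (a+1) b c d) 1 : MvPolynomial (Fin 4) k) ∈ J := by
  have := hborel _ h 1 0 (by decide) (Nat.succ_pos b)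
  have he : ee a (b+1) c d - Finsupp.single 1 1 + Finsupp.single 0 1 = ee (a+1) b c d := by
    ext i
    rw [Finsupp.add_apply, Finsupp.tsub_apply]
    fin_cases i <;> simp [ee, Finsupp.single_apply]
  rwa [he] at this

-- generator conversions
lemma gX0sq : (X 0 ^ 2 : MvPolynomial (Fin 4) k) = monomial (ee 2 0 0 0) 1 := by
  have hs : (Finsupp.single 0 2 : Fin 4 →₀ ℕ) = ee 2 0 0 0 := by
    ext i; fin_cases i <;> simp [ee, Finsupp.single_apply]
  rw [X_pow_eq_monomial, hs]
lemma gX0X1 : (X 0 * X 1 : MvPolynomial (Fin 4) k) = monomial (ee 1 1 0 0) 1 := by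
  have hs : (Finsupp.single 0 1 + Finsupp.single 1 1 : Fin 4 →₀ ℕ) = ee 1 1 0 0 := by
    ext i; fin_cases i <;> simp [ee, Finsupp.single_apply]
  rw [X, X, monomial_mul, mul_one, hs]
lemma gX1sq : (X 1 ^ 2 : MvPolynomial (Fin 4) k) = monomial (ee 0 2 0 0) 1 := by
  have hs : (Finsupp.single 1 2 : Fin 4 →₀ ℕ) = ee 0 2 0 0 := by
    ext i; fin_cases i <;> simp [ee, Finsupp.single_apply]
  rw [X_pow_eq_monomial, hs]
lemma gX0X2sq : (X 0 * X 2 ^ 2 : MvPolynomial (Fin 4) k) = monomial (ee 1 0 2 0) 1 := by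
  have hs : (Finsupp.single 0 1 + Finsupp.single 2 2 : Fin 4 →₀ ℕ) = ee 1 0 2 0 := by
    ext i; fin_cases i <;> simp [ee, Finsupp.single_apply]
  rw [X, X_pow_eq_monomial, monomial_mul, mul_one, hs]
lemma gX1X2sq : (X 1 * X 2 ^ 2 : MvPolynomial (Fin 4) k) = monomial (ee 0 1 2 0) 1 := by
  have hs : (Finsupp.single 1 1 + Finsupp.single 2 2 : Fin 4 →₀ ℕ) = ee 0 1 2 0 := by
    ext i; fin_cases i <;> simp [ee, Finsupp.single_apply]
  rw [X, X_pow_eq_monomial, monomial_mul, mul_one, hs]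
lemma gX2four : (X 2 ^ 4 : MvPolynomial (Fin 4) k) = monomial (ee 0 0 4 0) 1 := by
  have hs : (Finsupp.single 2 4 : Fin 4 →₀ ℕ) = ee 0 0 4 0 := by
    ext i; fin_cases i <;> simp [ee, Finsupp.single_apply]
  rw [X_pow_eq_monomial, hs]
lemma gX0X2 : (X 0 * X 2 : MvPolynomial (Fin 4) k) = monomial (ee 1 0 1 0) 1 := by
  have hs : (Finsupp.single 0 1 + Finsupp.single 2 1 : Fin 4 →₀ ℕ) = ee 1 0 1 0 := by
    ext i; fin_cases i <;> simp [ee, Finsupp.single_apply]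
  rw [X, X, monomial_mul, mul_one, hs]
lemma gX1cube : (X 1 ^ 3 : MvPolynomial (Fin 4) k) = monomial (ee 0 3 0 0) 1 := by
  have hs : (Finsupp.single 1 3 : Fin 4 →₀ ℕ) = ee 0 3 0 0 := by
    ext i; fin_cases i <;> simp [ee, Finsupp.single_apply]
  rw [X_pow_eq_monomial, hs]
lemma gX1sqX2 : (X 1 ^ 2 * X 2 : MvPolynomial (Fin 4) k) = monomial (ee 0 2 1 0) 1 := by
  have hs : (Finsupp.single 1 2 + Finsupp.single 2 1 : Fin 4 →₀ ℕ) = ee 0 2 1 0 := by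
    ext i; fin_cases i <;> simp [ee, Finsupp.single_apply]
  rw [X_pow_eq_monomial, X, monomial_mul, mul_one, hs]
end


/-- Section 6: a Borel-fixed monomial ideal `J ⊆ k[x₁,x₂,x₃,x₄]` (char `k = 0`) with the Hilbert
function of a complete intersection of three quadrics and with `J : x₄ = J` is one of
`J₁ = (x₁², x₁x₂, x₂², x₁x₃², x₂x₃², x₃⁴)` or
`J₂ = (x₁², x₁x₂, x₁x₃, x₂³, x₂²x₃, x₂x₃², x₃⁴)`.
(Here `x₁ = X 0, x₂ = X 1, x₃ = X 2, x₄ = X 3`.) -/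
theorem stmt_13 (k : Type*) [Field k] [CharZero k]
    (J : Ideal (MvPolynomial (Fin 4) k))
    -- `J` is a monomial ideal
    (hmono : ∀ f ∈ J, ∀ I ∈ f.support, (monomial I 1 : MvPolynomial (Fin 4) k) ∈ J)
    -- `J` is Borel-fixed: `m ∈ J`, `xᵢ ∣ m`, `j < i` implies `m·xⱼ/xᵢ ∈ J`
    (hborel : ∀ I : Fin 4 →₀ ℕ, (monomial I 1 : MvPolynomial (Fin 4) k) ∈ J →
      ∀ i j : Fin 4, j < i → 0 < I i →
        (monomial (I - Finsupp.single i 1 + Finsupp.single j 1) 1 :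
          MvPolynomial (Fin 4) k) ∈ J)
    -- `J` has the Hilbert function of a complete intersection of three quadrics
    (hhilb : ∀ d : ℕ,
      Module.finrank k
        ↥(homogeneousSubmodule (Fin 4) k d ⊓ J.restrictScalars k) + hCI d
        = (d + 3).choose 3)
    -- `J : x₄ = J`
    (hsat : J.colon ((Ideal.span {X 3} : Ideal (MvPolynomial (Fin 4) k)) :
      Set (MvPolynomial (Fin 4) k)) = J) :
    J = Ideal.span {X 0 ^ 2, X 0 * X 1, X 1 ^ 2, X 0 * X 2 ^ 2, X 1 * X 2 ^ 2, X 2 ^ 4} ∨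
    J = Ideal.span {X 0 ^ 2, X 0 * X 1, X 0 * X 2, X 1 ^ 3, X 1 ^ 2 * X 2,
      X 1 * X 2 ^ 2, X 2 ^ 4} := by
  have r0 : Module.finrank k ↥(gp k J 0) = 0 := by
    have h := hhilb 0
    have ec : (0+3).choose 3 = 1 := by decide
    have eh : hCI 0 = 1 := rfl
    rw [ec, eh] at h
    show Module.finrank k ↥(homogeneousSubmodule (Fin 4) k 0 ⊓ J.restrictScalars k) = 0
    omega
  have r1 : Module.finrank k ↥(gp k J 1) = 0 := by
    have h := hhilb 1
    have ec : (1+3).choose 3 = 4 := by decide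
    have eh : hCI 1 = 4 := rfl
    rw [ec, eh] at h
    show Module.finrank k ↥(homogeneousSubmodule (Fin 4) k 1 ⊓ J.restrictScalars k) = 0
    omega
  have r2 : Module.finrank k ↥(gp k J 2) = 3 := by
    have h := hhilb 2
    have ec : (2+3).choose 3 = 10 := by decide
    have eh : hCI 2 = 7 := rfl
    rw [ec, eh] at h
    show Module.finrank k ↥(homogeneousSubmodule (Fin 4) k 2 ⊓ J.restrictScalars k) = 3
    omega
  have r3 : Module.finrank k ↥(gp k J 3) = 12 := by
    have h := hhilb 3
    have ec : (3+3).choose 3 = 20 := by decide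
    have eh : hCI 3 = 8 := rfl
    rw [ec, eh] at h
    show Module.finrank k ↥(homogeneousSubmodule (Fin 4) k 3 ⊓ J.restrictScalars k) = 12
    omega
  have r4 : Module.finrank k ↥(gp k J 4) = 27 := by
    have h := hhilb 4
    have ec : (4+3).choose 3 = 35 := by decide
    have eh : hCI 4 = 8 := rfl
    rw [ec, eh] at h
    show Module.finrank k ↥(homogeneousSubmodule (Fin 4) k 4 ⊓ J.restrictScalars k) = 27
    omega
  -- Degree 0 and 1: no small monomials in J
  have h1 : (monomial (ee 0 0 0 0) 1 : MvPolynomial (Fin 4) k) ∉ J := by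
    intro hm
    have hlb := rank_lower 0 ({(0,0,0,0)} : Finset (ℕ × ℕ × ℕ × ℕ)) hmono (by decide)
      (by intro p hp; fin_cases hp <;> dsimp only <;> exact hm)
    rw [show ({(0,0,0,0)} : Finset (ℕ × ℕ × ℕ × ℕ)).card = 1 by decide] at hlb
    omega
  have hx1 : (monomial (ee 1 0 0 0) 1 : MvPolynomial (Fin 4) k) ∉ J := by
    intro hm
    have hlb := rank_lower 1 ({(1,0,0,0)} : Finset (ℕ × ℕ × ℕ × ℕ)) hmono (by decide)
      (by intro p hp; fin_cases hp <;> dsimp only <;> exact hm)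
    rw [show ({(1,0,0,0)} : Finset (ℕ × ℕ × ℕ × ℕ)).card = 1 by decide] at hlb
    omega
  have hx2 : (monomial (ee 0 1 0 0) 1 : MvPolynomial (Fin 4) k) ∉ J := by
    intro hm
    have hlb := rank_lower 1 ({(0,1,0,0)} : Finset (ℕ × ℕ × ℕ × ℕ)) hmono (by decide)
      (by intro p hp; fin_cases hp <;> dsimp only <;> exact hm)
    rw [show ({(0,1,0,0)} : Finset (ℕ × ℕ × ℕ × ℕ)).card = 1 by decide] at hlb
    omega
  have hx3 : (monomial (ee 0 0 1 0) 1 : MvPolynomial (Fin 4) k) ∉ J := by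
    intro hm
    have hlb := rank_lower 1 ({(0,0,1,0)} : Finset (ℕ × ℕ × ℕ × ℕ)) hmono (by decide)
      (by intro p hp; fin_cases hp <;> dsimp only <;> exact hm)
    rw [show ({(0,0,1,0)} : Finset (ℕ × ℕ × ℕ × ℕ)).card = 1 by decide] at hlb
    omega
  -- Degree 2 exclusions
  have hx3sq : (monomial (ee 0 0 2 0) 1 : MvPolynomial (Fin 4) k) ∉ J := by
    intro hm
    have hlbA := rank_lower 2 ({(0,0,2,0), (0,1,1,0), (1,0,1,0), (0,2,0,0), (1,1,0,0), (2,0,0,0)} : Finset (ℕ × ℕ × ℕ × ℕ)) hmono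
      (by decide) (by intro p hp; fin_cases hp <;> dsimp only; exacts [hm, move21 hborel hm, move10 hborel (move21 hborel hm), move21 hborel (move21 hborel hm), move10 hborel (move21 hborel (move21 hborel hm)), move10 hborel (move10 hborel (move21 hborel (move21 hborel hm)))])
    rw [show ({(0,0,2,0), (0,1,1,0), (1,0,1,0), (0,2,0,0), (1,1,0,0), (2,0,0,0)} : Finset (ℕ × ℕ × ℕ × ℕ)).card = 6 by decide] at hlbA
    omega
  have hx2x3 : (monomial (ee 0 1 1 0) 1 : MvPolynomial (Fin 4) k) ∉ J := by
    intro hm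
    have hlbB := rank_lower 2 ({(0,1,1,0), (1,0,1,0), (0,2,0,0), (1,1,0,0), (2,0,0,0)} : Finset (ℕ × ℕ × ℕ × ℕ)) hmono
      (by decide) (by intro p hp; fin_cases hp <;> dsimp only; exacts [hm, move10 hborel hm, move21 hborel hm, move10 hborel (move21 hborel hm), move10 hborel (move10 hborel (move21 hborel hm))])
    rw [show ({(0,1,1,0), (1,0,1,0), (0,2,0,0), (1,1,0,0), (2,0,0,0)} : Finset (ℕ × ℕ × ℕ × ℕ)).card = 5 by decide] at hlbB
    omega
  by_cases hb : (monomial (ee 0 2 0 0) 1 : MvPolynomial (Fin 4) k) ∈ J <;>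
    by_cases hc : (monomial (ee 1 0 1 0) 1 : MvPolynomial (Fin 4) k) ∈ J
  · -- both: impossible
    exfalso
    have hlbC := rank_lower 2 ({(0,2,0,0), (1,0,1,0), (1,1,0,0), (2,0,0,0)} : Finset (ℕ × ℕ × ℕ × ℕ)) hmono
      (by decide) (by intro p hp; fin_cases hp <;> dsimp only; exacts [hb, hc, move10 hborel hb, move10 hborel (move10 hborel hb)])
    rw [show ({(0,2,0,0), (1,0,1,0), (1,1,0,0), (2,0,0,0)} : Finset (ℕ × ℕ × ℕ × ℕ)).card = 4 by decide] at hlbC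
    omega
  · -- Branch 1 : x₂² ∈ J, x₁x₃ ∉ J
    left
    have hx1x2 : (monomial (ee 1 1 0 0) 1 : MvPolynomial (Fin 4) k) ∈ J := move10 hborel hb
    have hx1sq : (monomial (ee 2 0 0 0) 1 : MvPolynomial (Fin 4) k) ∈ J := move10 hborel hx1x2
    have hx3cube : (monomial (ee 0 0 3 0) 1 : MvPolynomial (Fin 4) k) ∉ J := by
      intro hm
      have hA := move21 hborel hm
      have hB := move10 hborel hA
      have hlbD := rank_lower 3 ({(3,0,0,0), (2,1,0,0), (1,2,0,0), (0,3,0,0), (2,0,1,0), (1,1,1,0), (0,2,1,0), (2,0,0,1), (1,1,0,1), (0,2,0,1), (0,0,3,0), (0,1,2,0), (1,0,2,0)} : Finset (ℕ × ℕ × ℕ × ℕ)) hmono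
        (by decide) (by intro p hp; fin_cases hp <;> dsimp only; exacts [mem_mul hx1sq, mem_mul hx1sq, mem_mul hx1x2, mem_mul hb, mem_mul hx1sq, mem_mul hx1x2, mem_mul hb, mem_mul hx1sq, mem_mul hx1x2, mem_mul hb, mem_mul hm, mem_mul hA, mem_mul hB])
      rw [show ({(3,0,0,0), (2,1,0,0), (1,2,0,0), (0,3,0,0), (2,0,1,0), (1,1,1,0), (0,2,1,0), (2,0,0,1), (1,1,0,1), (0,2,0,1), (0,0,3,0), (0,1,2,0), (1,0,2,0)} : Finset (ℕ × ℕ × ℕ × ℕ)).card = 13 by decide] at hlbD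
      omega
    have h120 : (monomial (ee 1 0 2 0) 1 : MvPolynomial (Fin 4) k) ∈ J := by
      by_contra h120n
      have h021n : (monomial (ee 0 1 2 0) 1 : MvPolynomial (Fin 4) k) ∉ J :=
        fun hh => h120n (move10 hborel hh)
      have hTE : ∀ I : Fin 4 →₀ ℕ, I.degree = 3 →
          (monomial I 1 : MvPolynomial (Fin 4) k) ∈ J →
          (I 0, I 1, I 2, I 3) ∈ ({(3,0,0,0), (2,1,0,0), (1,2,0,0), (0,3,0,0), (2,0,1,0), (1,1,1,0), (0,2,1,0), (2,0,0,1), (1,1,0,1), (0,2,0,1)} : Finset (ℕ × ℕ × ℕ × ℕ)) := by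
        intro I hdeg hmemI
        obtain ⟨a, b, c, dd, rfl⟩ := components I
        rw [ee_degree] at hdeg
        replace hmemI := strip0 hsat hmemI
        show (a, b, c, dd) ∈ _
        have hba : a ≤ 3 := by omega
        have hbb : b ≤ 3 := by omega
        have hbc : c ≤ 3 := by omega
        have hbd : dd ≤ 3 := by omega
        interval_cases a <;> interval_cases b <;> interval_cases c <;> interval_cases dd <;>
          first
            | omega
            | decide
            | exact absurd hmemI (by assumption)
      have hubE := rank_upper 3 _ hmono hTE
      rw [show ({(3,0,0,0), (2,1,0,0), (1,2,0,0), (0,3,0,0), (2,0,1,0), (1,1,1,0), (0,2,1,0), (2,0,0,1), (1,1,0,1), (0,2,0,1)} : Finset (ℕ × ℕ × ℕ × ℕ)).card = 10 by decide] at hubE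
      omega
    have h021 : (monomial (ee 0 1 2 0) 1 : MvPolynomial (Fin 4) k) ∈ J := by
      by_contra h021n
      have hTF : ∀ I : Fin 4 →₀ ℕ, I.degree = 3 →
          (monomial I 1 : MvPolynomial (Fin 4) k) ∈ J →
          (I 0, I 1, I 2, I 3) ∈ ({(3,0,0,0), (2,1,0,0), (1,2,0,0), (0,3,0,0), (2,0,1,0), (1,1,1,0), (0,2,1,0), (2,0,0,1), (1,1,0,1), (0,2,0,1), (1,0,2,0)} : Finset (ℕ × ℕ × ℕ × ℕ)) := by
        intro I hdeg hmemI
        obtain ⟨a, b, c, dd, rfl⟩ := components I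
        rw [ee_degree] at hdeg
        replace hmemI := strip0 hsat hmemI
        show (a, b, c, dd) ∈ _
        have hba : a ≤ 3 := by omega
        have hbb : b ≤ 3 := by omega
        have hbc : c ≤ 3 := by omega
        have hbd : dd ≤ 3 := by omega
        interval_cases a <;> interval_cases b <;> interval_cases c <;> interval_cases dd <;>
          first
            | omega
            | decide
            | exact absurd hmemI (by assumption)
      have hubF := rank_upper 3 _ hmono hTF
      rw [show ({(3,0,0,0), (2,1,0,0), (1,2,0,0), (0,3,0,0), (2,0,1,0), (1,1,1,0), (0,2,1,0), (2,0,0,1), (1,1,0,1), (0,2,0,1), (1,0,2,0)} : Finset (ℕ × ℕ × ℕ × ℕ)).card = 11 by decide] at hubF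
      omega
    have h40 : (monomial (ee 0 0 4 0) 1 : MvPolynomial (Fin 4) k) ∈ J := by
      by_contra h40n
      have hTG : ∀ I : Fin 4 →₀ ℕ, I.degree = 4 →
          (monomial I 1 : MvPolynomial (Fin 4) k) ∈ J →
          (I 0, I 1, I 2, I 3) ∈ ({(0,1,2,1), (0,1,3,0), (0,2,0,2), (0,2,1,1), (0,2,2,0), (0,3,0,1), (0,3,1,0), (0,4,0,0), (1,0,2,1), (1,0,3,0), (1,1,0,2), (1,1,1,1), (1,1,2,0), (1,2,0,1), (1,2,1,0), (1,3,0,0), (2,0,0,2), (2,0,1,1), (2,0,2,0), (2,1,0,1), (2,1,1,0), (2,2,0,0), (3,0,0,1), (3,0,1,0), (3,1,0,0), (4,0,0,0)} : Finset (ℕ × ℕ × ℕ × ℕ)) := by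
        intro I hdeg hmemI
        obtain ⟨a, b, c, dd, rfl⟩ := components I
        rw [ee_degree] at hdeg
        replace hmemI := strip0 hsat hmemI
        show (a, b, c, dd) ∈ _
        have hba : a ≤ 4 := by omega
        have hbb : b ≤ 4 := by omega
        have hbc : c ≤ 4 := by omega
        have hbd : dd ≤ 4 := by omega
        interval_cases a <;> interval_cases b <;> interval_cases c <;> interval_cases dd <;>
          first
            | omega
            | decide
            | exact absurd hmemI (by assumption)
      have hubG := rank_upper 4 _ hmono hTG
      rw [show ({(0,1,2,1), (0,1,3,0), (0,2,0,2), (0,2,1,1), (0,2,2,0), (0,3,0,1), (0,3,1,0), (0,4,0,0), (1,0,2,1), (1,0,3,0), (1,1,0,2), (1,1,1,1), (1,1,2,0), (1,2,0,1), (1,2,1,0), (1,3,0,0), (2,0,0,2), (2,0,1,1), (2,0,2,0), (2,1,0,1), (2,1,1,0), (2,2,0,0), (3,0,0,1), (3,0,1,0), (3,1,0,0), (4,0,0,0)} : Finset (ℕ × ℕ × ℕ × ℕ)).card = 26 by decide] at hubG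
      omega
    have hg1 : (monomial (ee 2 0 0 0) 1 : MvPolynomial (Fin 4) k) ∈ Ideal.span {X 0 ^ 2, X 0 * X 1, X 1 ^ 2, X 0 * X 2 ^ 2, X 1 * X 2 ^ 2, X 2 ^ 4} := by
      rw [← gX0sq]; exact Ideal.subset_span (by simp)
    have hg2 : (monomial (ee 1 1 0 0) 1 : MvPolynomial (Fin 4) k) ∈ Ideal.span {X 0 ^ 2, X 0 * X 1, X 1 ^ 2, X 0 * X 2 ^ 2, X 1 * X 2 ^ 2, X 2 ^ 4} := by
      rw [← gX0X1]; exact Ideal.subset_span (by simp)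
    have hg3 : (monomial (ee 0 2 0 0) 1 : MvPolynomial (Fin 4) k) ∈ Ideal.span {X 0 ^ 2, X 0 * X 1, X 1 ^ 2, X 0 * X 2 ^ 2, X 1 * X 2 ^ 2, X 2 ^ 4} := by
      rw [← gX1sq]; exact Ideal.subset_span (by simp)
    have hg4 : (monomial (ee 1 0 2 0) 1 : MvPolynomial (Fin 4) k) ∈ Ideal.span {X 0 ^ 2, X 0 * X 1, X 1 ^ 2, X 0 * X 2 ^ 2, X 1 * X 2 ^ 2, X 2 ^ 4} := by
      rw [← gX0X2sq]; exact Ideal.subset_span (by simp)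
    have hg5 : (monomial (ee 0 1 2 0) 1 : MvPolynomial (Fin 4) k) ∈ Ideal.span {X 0 ^ 2, X 0 * X 1, X 1 ^ 2, X 0 * X 2 ^ 2, X 1 * X 2 ^ 2, X 2 ^ 4} := by
      rw [← gX1X2sq]; exact Ideal.subset_span (by simp)
    have hg6 : (monomial (ee 0 0 4 0) 1 : MvPolynomial (Fin 4) k) ∈ Ideal.span {X 0 ^ 2, X 0 * X 1, X 1 ^ 2, X 0 * X 2 ^ 2, X 1 * X 2 ^ 2, X 2 ^ 4} := by
      rw [← gX2four]; exact Ideal.subset_span (by simp)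
    apply le_antisymm
    · intro f hf
      rw [as_sum f]
      refine Ideal.sum_mem _ (fun I hI => ?_)
      have hmI := hmono f hf I hI
      rw [show (monomial I (coeff I f) : MvPolynomial (Fin 4) k)
          = C (coeff I f) * monomial I 1 by rw [C_mul_monomial, mul_one]]
      apply Ideal.mul_mem_left
      obtain ⟨a, b, c, dd, rfl⟩ := components I
      replace hmI := strip0 hsat hmI
      have hpure : (monomial (ee a b c 0) 1 : MvPolynomial (Fin 4) k) ∈ Ideal.span {X 0 ^ 2, X 0 * X 1, X 1 ^ 2, X 0 * X 2 ^ 2, X 1 * X 2 ^ 2, X 2 ^ 4} := by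
        by_cases c1 : 2 ≤ a
        · exact mem_mul hg1
        by_cases c2 : 1 ≤ a ∧ 1 ≤ b
        · exact mem_mul hg2
        by_cases c3 : 2 ≤ b
        · exact mem_mul hg3
        by_cases c4 : 2 ≤ c
        · by_cases c5 : 1 ≤ a
          · exact mem_mul hg4
          by_cases c6 : 1 ≤ b
          · exact mem_mul hg5
          by_cases c7 : 4 ≤ c
          · exact mem_mul hg6
          exfalso
          obtain rfl : a = 0 := by omega
          obtain rfl : b = 0 := by omega
          have : c ≤ 3 := by omega
          interval_cases c
          · exact hx3sq hmI
          · exact hx3cube hmI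
        · exfalso
          have ha1 : a ≤ 1 := by omega
          have hb1 : b ≤ 1 := by omega
          have hc1 : c ≤ 1 := by omega
          interval_cases a <;> interval_cases b <;> interval_cases c <;>
            first | omega | exact absurd hmI (by assumption)
      exact mem_mul hpure
    · rw [Ideal.span_le]
      rintro g hg
      simp only [Set.mem_insert_iff, Set.mem_singleton_iff] at hg
      rcases hg with rfl | rfl | rfl | rfl | rfl | rfl
      · rw [gX0sq]; exact hx1sq
      · rw [gX0X1]; exact hx1x2
      · rw [gX1sq]; exact hb
      · rw [gX0X2sq]; exact h120
      · rw [gX1X2sq]; exact h021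
      · rw [gX2four]; exact h40

  · -- Branch 2 : x₁x₃ ∈ J, x₂² ∉ J
    right
    have hx1x2 : (monomial (ee 1 1 0 0) 1 : MvPolynomial (Fin 4) k) ∈ J := move21 hborel hc
    have hx1sq : (monomial (ee 2 0 0 0) 1 : MvPolynomial (Fin 4) k) ∈ J := move10 hborel hx1x2
    have hx3cube : (monomial (ee 0 0 3 0) 1 : MvPolynomial (Fin 4) k) ∉ J := by
      intro hm
      have hA := move21 hborel hm
      have hB := move21 hborel hA
      have hC := move21 hborel hB
      have hlbH := rank_lower 3 ({(3,0,0,0), (2,1,0,0), (2,0,1,0), (1,2,0,0), (1,1,1,0), (1,0,2,0), (2,0,0,1), (1,1,0,1), (1,0,1,1), (0,0,3,0), (0,1,2,0), (0,2,1,0), (0,3,0,0)} : Finset (ℕ × ℕ × ℕ × ℕ)) hmono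
        (by decide) (by intro p hp; fin_cases hp <;> dsimp only; exacts [mem_mul hx1sq, mem_mul hx1sq, mem_mul hx1sq, mem_mul hx1x2, mem_mul hx1x2, mem_mul hc, mem_mul hx1sq, mem_mul hx1x2, mem_mul hc, mem_mul hm, mem_mul hA, mem_mul hB, mem_mul hC])
      rw [show ({(3,0,0,0), (2,1,0,0), (2,0,1,0), (1,2,0,0), (1,1,1,0), (1,0,2,0), (2,0,0,1), (1,1,0,1), (1,0,1,1), (0,0,3,0), (0,1,2,0), (0,2,1,0), (0,3,0,0)} : Finset (ℕ × ℕ × ℕ × ℕ)).card = 13 by decide] at hlbH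
      omega
    have h300 : (monomial (ee 0 3 0 0) 1 : MvPolynomial (Fin 4) k) ∈ J := by
      by_contra h300n
      have h210n : (monomial (ee 0 2 1 0) 1 : MvPolynomial (Fin 4) k) ∉ J :=
        fun hh => h300n (move21 hborel hh)
      have h120n : (monomial (ee 0 1 2 0) 1 : MvPolynomial (Fin 4) k) ∉ J :=
        fun hh => h210n (move21 hborel hh)
      have hTI : ∀ I : Fin 4 →₀ ℕ, I.degree = 3 →
          (monomial I 1 : MvPolynomial (Fin 4) k) ∈ J →
          (I 0, I 1, I 2, I 3) ∈ ({(3,0,0,0), (2,1,0,0), (2,0,1,0), (1,2,0,0), (1,1,1,0), (1,0,2,0), (2,0,0,1), (1,1,0,1), (1,0,1,1)} : Finset (ℕ × ℕ × ℕ × ℕ)) := by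
        intro I hdeg hmemI
        obtain ⟨a, b, c, dd, rfl⟩ := components I
        rw [ee_degree] at hdeg
        replace hmemI := strip0 hsat hmemI
        show (a, b, c, dd) ∈ _
        have hba : a ≤ 3 := by omega
        have hbb : b ≤ 3 := by omega
        have hbc : c ≤ 3 := by omega
        have hbd : dd ≤ 3 := by omega
        interval_cases a <;> interval_cases b <;> interval_cases c <;> interval_cases dd <;>
          first
            | omega
            | decide
            | exact absurd hmemI (by assumption)
      have hubI := rank_upper 3 _ hmono hTI
      rw [show ({(3,0,0,0), (2,1,0,0), (2,0,1,0), (1,2,0,0), (1,1,1,0), (1,0,2,0), (2,0,0,1), (1,1,0,1), (1,0,1,1)} : Finset (ℕ × ℕ × ℕ × ℕ)).card = 9 by decide] at hubI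
      omega
    have h210 : (monomial (ee 0 2 1 0) 1 : MvPolynomial (Fin 4) k) ∈ J := by
      by_contra h210n
      have h120n : (monomial (ee 0 1 2 0) 1 : MvPolynomial (Fin 4) k) ∉ J :=
        fun hh => h210n (move21 hborel hh)
      have hTK : ∀ I : Fin 4 →₀ ℕ, I.degree = 3 →
          (monomial I 1 : MvPolynomial (Fin 4) k) ∈ J →
          (I 0, I 1, I 2, I 3) ∈ ({(3,0,0,0), (2,1,0,0), (2,0,1,0), (1,2,0,0), (1,1,1,0), (1,0,2,0), (2,0,0,1), (1,1,0,1), (1,0,1,1), (0,3,0,0)} : Finset (ℕ × ℕ × ℕ × ℕ)) := by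
        intro I hdeg hmemI
        obtain ⟨a, b, c, dd, rfl⟩ := components I
        rw [ee_degree] at hdeg
        replace hmemI := strip0 hsat hmemI
        show (a, b, c, dd) ∈ _
        have hba : a ≤ 3 := by omega
        have hbb : b ≤ 3 := by omega
        have hbc : c ≤ 3 := by omega
        have hbd : dd ≤ 3 := by omega
        interval_cases a <;> interval_cases b <;> interval_cases c <;> interval_cases dd <;>
          first
            | omega
            | decide
            | exact absurd hmemI (by assumption)
      have hubK := rank_upper 3 _ hmono hTK
      rw [show ({(3,0,0,0), (2,1,0,0), (2,0,1,0), (1,2,0,0), (1,1,1,0), (1,0,2,0), (2,0,0,1), (1,1,0,1), (1,0,1,1), (0,3,0,0)} : Finset (ℕ × ℕ × ℕ × ℕ)).card = 10 by decide] at hubK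
      omega
    have h120 : (monomial (ee 0 1 2 0) 1 : MvPolynomial (Fin 4) k) ∈ J := by
      by_contra h120n
      have hTL : ∀ I : Fin 4 →₀ ℕ, I.degree = 3 →
          (monomial I 1 : MvPolynomial (Fin 4) k) ∈ J →
          (I 0, I 1, I 2, I 3) ∈ ({(3,0,0,0), (2,1,0,0), (2,0,1,0), (1,2,0,0), (1,1,1,0), (1,0,2,0), (2,0,0,1), (1,1,0,1), (1,0,1,1), (0,3,0,0), (0,2,1,0)} : Finset (ℕ × ℕ × ℕ × ℕ)) := by
        intro I hdeg hmemI
        obtain ⟨a, b, c, dd, rfl⟩ := components I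
        rw [ee_degree] at hdeg
        replace hmemI := strip0 hsat hmemI
        show (a, b, c, dd) ∈ _
        have hba : a ≤ 3 := by omega
        have hbb : b ≤ 3 := by omega
        have hbc : c ≤ 3 := by omega
        have hbd : dd ≤ 3 := by omega
        interval_cases a <;> interval_cases b <;> interval_cases c <;> interval_cases dd <;>
          first
            | omega
            | decide
            | exact absurd hmemI (by assumption)
      have hubL := rank_upper 3 _ hmono hTL
      rw [show ({(3,0,0,0), (2,1,0,0), (2,0,1,0), (1,2,0,0), (1,1,1,0), (1,0,2,0), (2,0,0,1), (1,1,0,1), (1,0,1,1), (0,3,0,0), (0,2,1,0)} : Finset (ℕ × ℕ × ℕ × ℕ)).card = 11 by decide] at hubL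
      omega
    have h40 : (monomial (ee 0 0 4 0) 1 : MvPolynomial (Fin 4) k) ∈ J := by
      by_contra h40n
      have hTM : ∀ I : Fin 4 →₀ ℕ, I.degree = 4 →
          (monomial I 1 : MvPolynomial (Fin 4) k) ∈ J →
          (I 0, I 1, I 2, I 3) ∈ ({(0,1,2,1), (0,1,3,0), (0,2,1,1), (0,2,2,0), (0,3,0,1), (0,3,1,0), (0,4,0,0), (1,0,1,2), (1,0,2,1), (1,0,3,0), (1,1,0,2), (1,1,1,1), (1,1,2,0), (1,2,0,1), (1,2,1,0), (1,3,0,0), (2,0,0,2), (2,0,1,1), (2,0,2,0), (2,1,0,1), (2,1,1,0), (2,2,0,0), (3,0,0,1), (3,0,1,0), (3,1,0,0), (4,0,0,0)} : Finset (ℕ × ℕ × ℕ × ℕ)) := by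
        intro I hdeg hmemI
        obtain ⟨a, b, c, dd, rfl⟩ := components I
        rw [ee_degree] at hdeg
        replace hmemI := strip0 hsat hmemI
        show (a, b, c, dd) ∈ _
        have hba : a ≤ 4 := by omega
        have hbb : b ≤ 4 := by omega
        have hbc : c ≤ 4 := by omega
        have hbd : dd ≤ 4 := by omega
        interval_cases a <;> interval_cases b <;> interval_cases c <;> interval_cases dd <;>
          first
            | omega
            | decide
            | exact absurd hmemI (by assumption)
      have hubM := rank_upper 4 _ hmono hTM
      rw [show ({(0,1,2,1), (0,1,3,0), (0,2,1,1), (0,2,2,0), (0,3,0,1), (0,3,1,0), (0,4,0,0), (1,0,1,2), (1,0,2,1), (1,0,3,0), (1,1,0,2), (1,1,1,1), (1,1,2,0), (1,2,0,1), (1,2,1,0), (1,3,0,0), (2,0,0,2), (2,0,1,1), (2,0,2,0), (2,1,0,1), (2,1,1,0), (2,2,0,0), (3,0,0,1), (3,0,1,0), (3,1,0,0), (4,0,0,0)} : Finset (ℕ × ℕ × ℕ × ℕ)).card = 26 by decide] at hubM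
      omega
    have hg1 : (monomial (ee 2 0 0 0) 1 : MvPolynomial (Fin 4) k) ∈ Ideal.span {X 0 ^ 2, X 0 * X 1, X 0 * X 2, X 1 ^ 3, X 1 ^ 2 * X 2, X 1 * X 2 ^ 2, X 2 ^ 4} := by
      rw [← gX0sq]; exact Ideal.subset_span (by simp)
    have hg2 : (monomial (ee 1 1 0 0) 1 : MvPolynomial (Fin 4) k) ∈ Ideal.span {X 0 ^ 2, X 0 * X 1, X 0 * X 2, X 1 ^ 3, X 1 ^ 2 * X 2, X 1 * X 2 ^ 2, X 2 ^ 4} := by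
      rw [← gX0X1]; exact Ideal.subset_span (by simp)
    have hg3 : (monomial (ee 1 0 1 0) 1 : MvPolynomial (Fin 4) k) ∈ Ideal.span {X 0 ^ 2, X 0 * X 1, X 0 * X 2, X 1 ^ 3, X 1 ^ 2 * X 2, X 1 * X 2 ^ 2, X 2 ^ 4} := by
      rw [← gX0X2]; exact Ideal.subset_span (by simp)
    have hg4 : (monomial (ee 0 3 0 0) 1 : MvPolynomial (Fin 4) k) ∈ Ideal.span {X 0 ^ 2, X 0 * X 1, X 0 * X 2, X 1 ^ 3, X 1 ^ 2 * X 2, X 1 * X 2 ^ 2, X 2 ^ 4} := by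
      rw [← gX1cube]; exact Ideal.subset_span (by simp)
    have hg5 : (monomial (ee 0 2 1 0) 1 : MvPolynomial (Fin 4) k) ∈ Ideal.span {X 0 ^ 2, X 0 * X 1, X 0 * X 2, X 1 ^ 3, X 1 ^ 2 * X 2, X 1 * X 2 ^ 2, X 2 ^ 4} := by
      rw [← gX1sqX2]; exact Ideal.subset_span (by simp)
    have hg6 : (monomial (ee 0 1 2 0) 1 : MvPolynomial (Fin 4) k) ∈ Ideal.span {X 0 ^ 2, X 0 * X 1, X 0 * X 2, X 1 ^ 3, X 1 ^ 2 * X 2, X 1 * X 2 ^ 2, X 2 ^ 4} := by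
      rw [← gX1X2sq]; exact Ideal.subset_span (by simp)
    have hg7 : (monomial (ee 0 0 4 0) 1 : MvPolynomial (Fin 4) k) ∈ Ideal.span {X 0 ^ 2, X 0 * X 1, X 0 * X 2, X 1 ^ 3, X 1 ^ 2 * X 2, X 1 * X 2 ^ 2, X 2 ^ 4} := by
      rw [← gX2four]; exact Ideal.subset_span (by simp)
    apply le_antisymm
    · intro f hf
      rw [as_sum f]
      refine Ideal.sum_mem _ (fun I hI => ?_)
      have hmI := hmono f hf I hI
      rw [show (monomial I (coeff I f) : MvPolynomial (Fin 4) k)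
          = C (coeff I f) * monomial I 1 by rw [C_mul_monomial, mul_one]]
      apply Ideal.mul_mem_left
      obtain ⟨a, b, c, dd, rfl⟩ := components I
      replace hmI := strip0 hsat hmI
      have hpure : (monomial (ee a b c 0) 1 : MvPolynomial (Fin 4) k) ∈ Ideal.span {X 0 ^ 2, X 0 * X 1, X 0 * X 2, X 1 ^ 3, X 1 ^ 2 * X 2, X 1 * X 2 ^ 2, X 2 ^ 4} := by
        by_cases c1 : 2 ≤ a
        · exact mem_mul hg1
        by_cases c2 : 1 ≤ a ∧ 1 ≤ b
        · exact mem_mul hg2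
        by_cases c3 : 1 ≤ a ∧ 1 ≤ c
        · exact mem_mul hg3
        by_cases c4 : 3 ≤ b
        · exact mem_mul hg4
        by_cases c5 : 2 ≤ b ∧ 1 ≤ c
        · exact mem_mul hg5
        by_cases c6 : 1 ≤ b ∧ 2 ≤ c
        · exact mem_mul hg6
        by_cases c7 : 4 ≤ c
        · exact mem_mul hg7
        exfalso
        have ha1 : a ≤ 1 := by omega
        have hb1 : b ≤ 2 := by omega
        have hc1 : c ≤ 3 := by omega
        interval_cases a <;> interval_cases b <;> interval_cases c <;>
          first | omega | exact absurd hmI (by assumption)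
      exact mem_mul hpure
    · rw [Ideal.span_le]
      rintro g hg
      simp only [Set.mem_insert_iff, Set.mem_singleton_iff] at hg
      rcases hg with rfl | rfl | rfl | rfl | rfl | rfl | rfl
      · rw [gX0sq]; exact hx1sq
      · rw [gX0X1]; exact hx1x2
      · rw [gX0X2]; exact hc
      · rw [gX1cube]; exact h300
      · rw [gX1sqX2]; exact h210
      · rw [gX1X2sq]; exact h120
      · rw [gX2four]; exact h40

  · -- neither: impossible
    exfalso
    have hTN : ∀ I : Fin 4 →₀ ℕ, I.degree = 2 →
        (monomial I 1 : MvPolynomial (Fin 4) k) ∈ J →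
        (I 0, I 1, I 2, I 3) ∈ ({(2,0,0,0), (1,1,0,0)} : Finset (ℕ × ℕ × ℕ × ℕ)) := by
      intro I hdeg hmemI
      obtain ⟨a, b, c, dd, rfl⟩ := components I
      rw [ee_degree] at hdeg
      replace hmemI := strip0 hsat hmemI
      show (a, b, c, dd) ∈ _
      have hba : a ≤ 2 := by omega
      have hbb : b ≤ 2 := by omega
      have hbc : c ≤ 2 := by omega
      have hbd : dd ≤ 2 := by omega
      interval_cases a <;> interval_cases b <;> interval_cases c <;> interval_cases dd <;>
        first
          | omega
          | decide
          | exact absurd hmemI (by assumption)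
    have hubN := rank_upper 2 _ hmono hTN
    rw [show ({(2,0,0,0), (1,1,0,0)} : Finset (ℕ × ℕ × ℕ × ℕ)).card = 2 by decide] at hubN
    omega
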